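/- Let A = {A_1, …, A_n} be a convex boundary (each A_i is a nonempty convex compact) in a finite-dimensional real normed space X, let d be a solution vector for A and K_d = ⋂_{i=1}^n B_{d_i}(A_i). If a ∈ A_i is a far point and d_i > 0, then a lies on the topological boundary ∂A_i of A_i. -/

import Mathlib

open Metric Set

/-- `steinerSum A K = ∑ i, d_H(A_i, K)` — the functional from the Fermat–Steiner problem. -/
noncomputable def steinerSum {X : Type*} [PseudoMetricSpace X] {n : ℕ}
    (A : Fin n → Set X) (K : Set X) : ℝ :=
  ∑ i, Metric.hausdorffDist (A i) K

/-- A Steiner compact for the boundary `A`: a nonempty compact set minimizing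
`steinerSum A` over nonempty compact sets. -/
def IsSteinerCompact {X : Type*} [PseudoMetricSpace X] {n : ℕ}
    (A : Fin n → Set X) (K : Set X) : Prop :=
  K.Nonempty ∧ IsCompact K ∧
    ∀ K' : Set X, K'.Nonempty → IsCompact K' → steinerSum A K ≤ steinerSum A K'

/-- `d` is a solution vector for the boundary `A`: `d i = d_H(A_i, K)` for
some Steiner compact `K`. -/
def IsSolutionVector {X : Type*} [PseudoMetricSpace X] {n : ℕ}
    (A : Fin n → Set X) (d : Fin n → ℝ) : Prop :=
  ∃ K : Set X, IsSteinerCompact A K ∧ ∀ i, d i = Metric.hausdorffDist (A i) K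

theorem stmt8 {X : Type*} [NormedAddCommGroup X] [NormedSpace ℝ X] [FiniteDimensional ℝ X]
    (n : ℕ) (A : Fin n → Set X)
    (hA : ∀ i, (A i).Nonempty ∧ IsCompact (A i) ∧ Convex ℝ (A i))
    (d : Fin n → ℝ) (hd : IsSolutionVector A d)
    (Kd : Set X) (hKd : Kd = ⋂ i, cthickening (d i) (A i))
    (i : Fin n) (a : X) (ha : a ∈ A i)
    (hfar : ball a (d i) ∩ Kd = ∅) (hdi : 0 < d i) :
    a ∈ frontier (A i) := by
  obtain ⟨K, ⟨hKne, hKcomp, _⟩, hdK⟩ := hd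
  have hKne' := hKne
  -- K ⊆ Kd
  have hKKd : K ⊆ Kd := by
    intro x hx
    rw [hKd]
    refine mem_iInter.2 fun j => ?_
    have hfin : EMetric.hausdorffEdist (A j) K ≠ ⊤ :=
      hausdorffEdist_ne_top_of_nonempty_of_bounded (hA j).1 hKne
        (hA j).2.1.isBounded hKcomp.isBounded
    have h1 : infDist x (A j) ≤ hausdorffDist (A j) K := by
      rw [hausdorffDist_comm]
      exact infDist_le_hausdorffDist_of_mem hx (by rwa [EMetric.hausdorffEdist_comm])
    obtain ⟨y, hy, hxy⟩ := (hA j).2.1.exists_infDist_eq_dist (hA j).1 x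
    exact mem_cthickening_of_dist_le x y (d j) (A j) hy (by rw [← hxy, hdK j]; exact h1)
  -- Kd convex
  have hKdconv : Convex ℝ Kd := by
    rw [hKd]
    exact convex_iInter fun j => ((hA j).2.2).cthickening _
  -- far: every point of Kd is at distance ≥ d i from a
  have hfar' : ∀ p ∈ Kd, d i ≤ dist a p := by
    intro p hp
    by_contra h
    exact absurd (Set.eq_empty_iff_forall_notMem.1 hfar p ⟨by simpa [dist_comm] using lt_of_not_ge h, hp⟩) (fun x => x)
  -- suppose a interior
  by_contra hfr
  have hint : a ∈ interior (A i) := by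
    by_contra h'
    exact hfr ⟨subset_closure ha, h'⟩
  obtain ⟨δ, hδpos, hball⟩ := Metric.isOpen_iff.1 isOpen_interior a hint
  obtain ⟨k, hk⟩ := hKne'
  set t : ℝ := δ / (2 * (‖a - k‖ + 1)) with ht
  have hden : 0 < ‖a - k‖ + 1 := by positivity
  have htpos : 0 < t := by positivity
  set x : X := a + t • (a - k) with hx
  have hxball : x ∈ ball a δ := by
    have hxa : x - a = t • (a - k) := by rw [hx]; abel
    rw [mem_ball, dist_eq_norm, hxa, norm_smul, Real.norm_of_nonneg htpos.le]
    calc t * ‖a - k‖ ≤ t * (‖a - k‖ + 1) := by nlinarith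
      _ = δ / 2 := by rw [ht, div_mul_eq_mul_div, mul_div_mul_right _ _ hden.ne']
      _ < δ := by linarith
  have hxA : x ∈ A i := interior_subset (hball hxball)
  -- upper bound on infDist x K
  have hfin : EMetric.hausdorffEdist (A i) K ≠ ⊤ :=
    hausdorffEdist_ne_top_of_nonempty_of_bounded (hA i).1 hKne
      (hA i).2.1.isBounded hKcomp.isBounded
  have hub : infDist x K ≤ d i := by
    rw [hdK i]
    exact infDist_le_hausdorffDist_of_mem hxA hfin
  -- lower bound
  obtain ⟨k', hk', hxk'⟩ := hKcomp.exists_infDist_eq_dist hKne x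
  have hp : (t / (1 + t)) • k + ((1 : ℝ) / (1 + t)) • k' ∈ Kd := by
    apply hKdconv (hKKd hk) (hKKd hk')
    · positivity
    · positivity
    · field_simp; ring
  set p : X := (t / (1 + t)) • k + ((1 : ℝ) / (1 + t)) • k' with hpdef
  have h1t : (0 : ℝ) < 1 + t := by positivity
  have hkey : x - k' = (1 + t) • (a - p) := by
    rw [hpdef, hx]
    match_scalars <;> field_simp <;> ring
  have hlow : d i * (1 + t) ≤ ‖x - k'‖ := by
    rw [hkey, norm_smul, Real.norm_of_nonneg h1t.le]
    have := hfar' p hp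
    rw [dist_eq_norm] at this
    nlinarith [norm_nonneg (a - p)]
  have : ‖x - k'‖ ≤ d i := by
    rw [← dist_eq_norm, ← hxk']; exact hub
  nlinarith
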